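/- Let Φ be an irreducible root system with base {α₁,…,αₙ} and maximal short root β. Let u ∈ Δ be a vector in the fundamental Weyl cell with β*(u) = 1, supported on I_u ⊆ {1,…,n} in the fundamental weight basis, u ∉ Ω_G. Then every root in Ψ_u = {α ∈ Φ⁺ : α*(u) ∈ {0,1}} ∪ (−{α ∈ Φ⁺ : α*(u) ∈ {0,1}}) is an integral linear combination of the vectors {αᵢ : i ∉ I_u} ∪ {−β} with all coefficients of the same sign (all ≥ 0 or all ≤ 0); in particular {αᵢ : i ∉ I_u} ∪ {−β} is a base for the root subsystem Φ_u. -/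

import Mathlib

open scoped BigOperators
open scoped RealInnerProductSpace

/-- The coroot pairing `α*(x) = 2(x,α)/(α,α)`. -/
noncomputable def coPair {V : Type*} [NormedAddCommGroup V] [InnerProductSpace ℝ V]
    (a x : V) : ℝ :=
  2 * (inner ℝ x a : ℝ) / (inner ℝ a a : ℝ)

/-- `v` is a sum of the vectors `Δ i` with nonnegative integer coefficients. -/
def IsNNComb {V : Type*} [AddCommGroup V] [Module ℝ V] {n : ℕ}
    (Δ : Fin n → V) (v : V) : Prop :=
  ∃ c : Fin n → ℕ, v = ∑ i, (c i : ℝ) • Δ i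

/-- A crystallographic, irreducible root system `Φ` with base (simple roots) `Δ`. -/
structure IsIrreducibleRootSystem {V : Type*} [NormedAddCommGroup V] [InnerProductSpace ℝ V]
    {n : ℕ} (Φ : Finset V) (Δ : Fin n → V) : Prop where
  zero_not_mem : (0 : V) ∉ Φ
  base_mem : ∀ i, Δ i ∈ Φ
  crystallographic : ∀ a ∈ Φ, ∀ b ∈ Φ, ∃ k : ℤ, coPair a b = (k : ℝ)
  reflect_mem : ∀ a ∈ Φ, ∀ b ∈ Φ, b - coPair a b • a ∈ Φ
  base_expansion : ∀ a ∈ Φ, ∃ c : Fin n → ℤ,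
    ((∀ i, 0 ≤ c i) ∨ (∀ i, c i ≤ 0)) ∧ a = ∑ i, (c i : ℝ) • Δ i
  irreducible : ∀ S ⊆ Φ, S.Nonempty →
    (∀ a ∈ S, ∀ b ∈ Φ, b ∉ S → (inner ℝ a b : ℝ) = 0) → S = Φ

/-- A positive root: a root which is a nonnegative integral combination of simple roots. -/
def IsPositiveRoot {V : Type*} [NormedAddCommGroup V] [InnerProductSpace ℝ V] {n : ℕ}
    (Φ : Finset V) (Δ : Fin n → V) (a : V) : Prop :=
  a ∈ Φ ∧ IsNNComb Δ a

/-- `β` is the maximal (highest) short root of `Φ` w.r.t. the base `Δ`. -/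
def IsMaximalShortRoot {V : Type*} [NormedAddCommGroup V] [InnerProductSpace ℝ V] {n : ℕ}
    (Φ : Finset V) (Δ : Fin n → V) (β : V) : Prop :=
  β ∈ Φ ∧ (∀ a ∈ Φ, ‖β‖ ≤ ‖a‖) ∧ ∀ a ∈ Φ, ‖a‖ = ‖β‖ → IsNNComb Δ (β - a)

/-- `γ` is the maximal (highest) long root of `Φ` w.r.t. the base `Δ`. -/
def IsMaximalLongRoot {V : Type*} [NormedAddCommGroup V] [InnerProductSpace ℝ V] {n : ℕ}
    (Φ : Finset V) (Δ : Fin n → V) (γ : V) : Prop :=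
  γ ∈ Φ ∧ (∀ a ∈ Φ, ‖a‖ ≤ ‖γ‖) ∧ ∀ a ∈ Φ, ‖a‖ = ‖γ‖ → IsNNComb Δ (γ - a)

/-- `ω` is the family of fundamental dominant weights dual to the simple coroots of `Δ`. -/
def IsFundamentalWeights {V : Type*} [NormedAddCommGroup V] [InnerProductSpace ℝ V] {n : ℕ}
    (Δ : Fin n → V) (ω : Fin n → V) : Prop :=
  ∀ i j, coPair (Δ j) (ω i) = if i = j then 1 else 0

section Aux

variable {V : Type*} [NormedAddCommGroup V] [InnerProductSpace ℝ V] {n : ℕ}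
variable {Φ : Finset V} {Δ : Fin n → V} {ω : Fin n → V} {β : V}
variable {I : Finset (Fin n)} {lam : Fin n → ℝ} {u : V}

lemma coPair_eq_iff {a x : V} (ha : ⟪a, a⟫ ≠ 0) (k : ℝ) :
    coPair a x = k ↔ 2 * ⟪x, a⟫ = k * ⟪a, a⟫ := by
  unfold coPair
  rw [div_eq_iff ha]

lemma inner_self_pos' (hΦ : IsIrreducibleRootSystem Φ Δ) {a : V} (ha : a ∈ Φ) :
    0 < ⟪a, a⟫ := by
  have h0 : a ≠ 0 := fun h => hΦ.zero_not_mem (h ▸ ha)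
  have hn : 0 < ‖a‖ := norm_pos_iff.2 h0
  rw [real_inner_self_eq_norm_sq]
  positivity

lemma neg_mem' (hΦ : IsIrreducibleRootSystem Φ Δ) {a : V} (ha : a ∈ Φ) : -a ∈ Φ := by
  have h2 : coPair a a = 2 := by
    unfold coPair
    rw [mul_div_assoc, div_self (ne_of_gt (inner_self_pos' hΦ ha)), mul_one]
  have h := hΦ.reflect_mem a ha a ha
  rw [h2] at h
  have : a - (2:ℝ) • a = -a := by
    rw [two_smul]; abel
  rwa [this] at h

lemma norm_eq_iff_inner_eq (a b : V) : ‖a‖ = ‖b‖ ↔ ⟪a, a⟫ = ⟪b, b⟫ := by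
  rw [real_inner_self_eq_norm_mul_norm, real_inner_self_eq_norm_mul_norm]
  constructor
  · intro h; rw [h]
  · intro h; exact (mul_self_inj (norm_nonneg a) (norm_nonneg b)).1 h

lemma inner_u_simple (hΦ : IsIrreducibleRootSystem Φ Δ) (hω : IsFundamentalWeights Δ ω)
    (hu : u = ∑ i ∈ I, lam i • ω i) (j : Fin n) :
    ⟪u, Δ j⟫ = if j ∈ I then lam j * (⟪Δ j, Δ j⟫ / 2) else 0 := by
  have hΔ : ∀ i : Fin n, ⟪Δ i, Δ i⟫ ≠ 0 := fun i =>
    ne_of_gt (inner_self_pos' hΦ (hΦ.base_mem i))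
  have hωΔ : ∀ i : Fin n, ⟪ω i, Δ j⟫ = if i = j then ⟪Δ j, Δ j⟫ / 2 else 0 := by
    intro i
    have h := (coPair_eq_iff (hΔ j) _).1 (hω i j)
    split_ifs at h ⊢ with hij
    · linarith
    · linarith
  rw [hu, sum_inner]
  simp only [real_inner_smul_left, hωΔ, mul_ite, mul_zero]
  rw [Finset.sum_ite_eq' I j (fun i => lam i * (⟪Δ j, Δ j⟫ / 2))]

lemma inner_u_simple_nonneg (hΦ : IsIrreducibleRootSystem Φ Δ) (hω : IsFundamentalWeights Δ ω)
    (hlam : ∀ i ∈ I, 0 < lam i) (hu : u = ∑ i ∈ I, lam i • ω i) (j : Fin n) :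
    0 ≤ ⟪u, Δ j⟫ := by
  rw [inner_u_simple hΦ hω hu j]
  split_ifs with h
  · have := hlam j h
    have := inner_self_pos' hΦ (hΦ.base_mem j)
    positivity
  · exact le_refl 0

lemma inner_u_simple_pos (hΦ : IsIrreducibleRootSystem Φ Δ) (hω : IsFundamentalWeights Δ ω)
    (hlam : ∀ i ∈ I, 0 < lam i) (hu : u = ∑ i ∈ I, lam i • ω i) {j : Fin n} (hj : j ∈ I) :
    0 < ⟪u, Δ j⟫ := by
  rw [inner_u_simple hΦ hω hu j, if_pos hj]
  have := hlam j hj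
  have := inner_self_pos' hΦ (hΦ.base_mem j)
  positivity

lemma two_inner_u_beta (hΦ : IsIrreducibleRootSystem Φ Δ) (hβ : IsMaximalShortRoot Φ Δ β)
    (hcell : coPair β u = 1) : 2 * ⟪u, β⟫ = ⟪β, β⟫ := by
  have h := (coPair_eq_iff (ne_of_gt (inner_self_pos' hΦ hβ.1)) _).1 hcell
  linarith

lemma nncomb_inner_u_nonneg (hΦ : IsIrreducibleRootSystem Φ Δ) (hω : IsFundamentalWeights Δ ω)
    (hlam : ∀ i ∈ I, 0 < lam i) (hu : u = ∑ i ∈ I, lam i • ω i)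
    {v : V} {e : Fin n → ℕ} (he : v = ∑ i, (e i : ℝ) • Δ i) :
    0 ≤ ⟪u, v⟫ := by
  rw [he, inner_sum]
  refine Finset.sum_nonneg fun i _ => ?_
  rw [real_inner_smul_right]
  exact mul_nonneg (by positivity) (inner_u_simple_nonneg hΦ hω hlam hu i)

lemma nncomb_support (hΦ : IsIrreducibleRootSystem Φ Δ) (hω : IsFundamentalWeights Δ ω)
    (hlam : ∀ i ∈ I, 0 < lam i) (hu : u = ∑ i ∈ I, lam i • ω i)
    {v : V} {e : Fin n → ℕ} (he : v = ∑ i, (e i : ℝ) • Δ i) (hv : ⟪u, v⟫ = 0) :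
    ∀ i ∈ I, e i = 0 := by
  have hexp : ∑ i, (e i : ℝ) * ⟪u, Δ i⟫ = 0 := by
    rw [← hv, he, inner_sum]
    simp [real_inner_smul_right]
  have hnn : ∀ i ∈ Finset.univ, (0:ℝ) ≤ (e i : ℝ) * ⟪u, Δ i⟫ := fun i _ =>
    mul_nonneg (by positivity) (inner_u_simple_nonneg hΦ hω hlam hu i)
  have hz := (Finset.sum_eq_zero_iff_of_nonneg hnn).1 hexp
  intro i hi
  have h0 := hz i (Finset.mem_univ i)
  have hpos := inner_u_simple_pos hΦ hω hlam hu hi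
  have : (e i : ℝ) = 0 := by
    rcases mul_eq_zero.1 h0 with h | h
    · exact h
    · exact absurd h (ne_of_gt hpos)
  exact_mod_cast this

lemma short_bound (hΦ : IsIrreducibleRootSystem Φ Δ) (hω : IsFundamentalWeights Δ ω)
    (hβ : IsMaximalShortRoot Φ Δ β) (hlam : ∀ i ∈ I, 0 < lam i)
    (hu : u = ∑ i ∈ I, lam i • ω i) (hcell : coPair β u = 1)
    {σ : V} (hσ : σ ∈ Φ) (hσs : ⟪σ, σ⟫ = ⟪β, β⟫) :
    2 * ⟪u, σ⟫ ≤ ⟪β, β⟫ := by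
  obtain ⟨e, he⟩ := hβ.2.2 σ hσ ((norm_eq_iff_inner_eq σ β).2 hσs)
  have h0 := nncomb_inner_u_nonneg hΦ hω hlam hu he
  rw [inner_sub_right] at h0
  have hb := two_inner_u_beta hΦ hβ hcell
  linarith

lemma short_exact (hΦ : IsIrreducibleRootSystem Φ Δ) (hω : IsFundamentalWeights Δ ω)
    (hβ : IsMaximalShortRoot Φ Δ β) (hlam : ∀ i ∈ I, 0 < lam i)
    (hu : u = ∑ i ∈ I, lam i • ω i) (hcell : coPair β u = 1)
    {σ : V} (hσ : σ ∈ Φ) (hσs : ⟪σ, σ⟫ = ⟪β, β⟫) (hσu : 2 * ⟪u, σ⟫ = ⟪β, β⟫) :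
    ∃ e : Fin n → ℕ, (∀ i ∈ I, e i = 0) ∧ β - σ = ∑ i, (e i : ℝ) • Δ i := by
  obtain ⟨e, he⟩ := hβ.2.2 σ hσ ((norm_eq_iff_inner_eq σ β).2 hσs)
  refine ⟨e, ?_, he⟩
  have hb := two_inner_u_beta hΦ hβ hcell
  have hz : ⟪u, β - σ⟫ = 0 := by
    rw [inner_sub_right]; linarith
  exact nncomb_support hΦ hω hlam hu he hz

lemma exists_short_not_orth (hΦ : IsIrreducibleRootSystem Φ Δ)
    (hβ : IsMaximalShortRoot Φ Δ β) {b : V} (hb : b ∈ Φ) :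
    ∃ σ ∈ Φ, ⟪σ, σ⟫ = ⟪β, β⟫ ∧ ⟪b, σ⟫ ≠ 0 := by
  classical
  by_contra hcon
  push_neg at hcon
  -- hcon : ∀ σ ∈ Φ, ⟪σ,σ⟫ = ⟪β,β⟫ → ⟪b,σ⟫ = 0
  set U : Submodule ℝ V := Submodule.span ℝ {σ | σ ∈ Φ ∧ ⟪σ, σ⟫ = ⟪β, β⟫} with hU
  have hgen : ∀ σ ∈ Φ, ⟪σ, σ⟫ = ⟪β, β⟫ → σ ∈ U := fun σ h1 h2 =>
    Submodule.subset_span ⟨h1, h2⟩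
  -- step 1 : any root non-orthogonal to some short root lies in U
  have step1 : ∀ c ∈ Φ, ∀ σ ∈ Φ, ⟪σ, σ⟫ = ⟪β, β⟫ → ⟪c, σ⟫ ≠ 0 → c ∈ U := by
    intro c hc σ hσ hσs hne
    have hcc := inner_self_pos' hΦ hc
    set k : ℝ := coPair c σ with hk
    have hk' : 2 * ⟪σ, c⟫ = k * ⟪c, c⟫ := (coPair_eq_iff (ne_of_gt hcc) k).1 rfl
    have hkne : k ≠ 0 := by
      intro h0
      rw [h0, zero_mul] at hk'
      exact hne (by rw [real_inner_comm]; linarith)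
    have hσ' : σ - k • c ∈ Φ := hΦ.reflect_mem c hc σ hσ
    have hσ's : ⟪σ - k • c, σ - k • c⟫ = ⟪β, β⟫ := by
      rw [real_inner_sub_sub_self, real_inner_smul_right, real_inner_smul_left,
        real_inner_smul_right]
      linear_combination hσs - k * hk'
    have hmem : σ - k • c ∈ U := hgen _ hσ' hσ's
    have hσU : σ ∈ U := hgen _ hσ hσs
    have : k • c ∈ U := by
      have := U.sub_mem hσU hmem
      simpa using this
    have := U.smul_mem k⁻¹ this
    rwa [smul_smul, inv_mul_cancel₀ hkne, one_smul] at this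
  -- the filtered set satisfies the irreducibility hypothesis
  have hS : Φ.filter (fun a => a ∈ U) = Φ := by
    apply hΦ.irreducible _ (Finset.filter_subset _ _)
    · exact ⟨β, Finset.mem_filter.2 ⟨hβ.1, hgen β hβ.1 rfl⟩⟩
    · intro a ha b' hb' hb'n
      have haU : a ∈ U := (Finset.mem_filter.1 ha).2
      have hb'U : b' ∉ U := fun h => hb'n (Finset.mem_filter.2 ⟨hb', h⟩)
      -- b' is orthogonal to every short root
      have horth : ∀ σ ∈ Φ, ⟪σ, σ⟫ = ⟪β, β⟫ → ⟪b', σ⟫ = 0 := by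
        intro σ hσ hσs
        by_contra hne
        exact hb'U (step1 b' hb' σ hσ hσs hne)
      -- hence U ≤ (span {b'})ᗮ
      have hle : U ≤ (Submodule.span ℝ ({b'} : Set V))ᗮ := by
        rw [hU, Submodule.span_le]
        rintro σ ⟨h1, h2⟩
        exact Submodule.mem_orthogonal_singleton_iff_inner_left.2
          (by rw [real_inner_comm]; exact horth σ h1 h2)
      exact Submodule.mem_orthogonal_singleton_iff_inner_left.1 (hle haU)
  -- now b ∈ U but b ⊥ U, so ⟪b,b⟫ = 0
  have hbU : b ∈ U := by
    have : b ∈ Φ.filter (fun a => a ∈ U) := by rw [hS]; exact hb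
    exact (Finset.mem_filter.1 this).2
  have hble : U ≤ (Submodule.span ℝ ({b} : Set V))ᗮ := by
    rw [hU, Submodule.span_le]
    rintro σ ⟨h1, h2⟩
    exact Submodule.mem_orthogonal_singleton_iff_inner_left.2
      (by rw [real_inner_comm]; exact hcon σ h1 h2)
  have hzz := Submodule.mem_orthogonal_singleton_iff_inner_left.1 (hble hbU)
  exact absurd hzz (ne_of_gt (inner_self_pos' hΦ hb))

lemma long_case (hΦ : IsIrreducibleRootSystem Φ Δ) (hω : IsFundamentalWeights Δ ω)
    (hβ : IsMaximalShortRoot Φ Δ β) (hlam : ∀ i ∈ I, 0 < lam i)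
    (hu : u = ∑ i ∈ I, lam i • ω i) (hcell : coPair β u = 1)
    {b : V} (hb : b ∈ Φ) (hlong : ⟪β, β⟫ < ⟪b, b⟫) (hbu : 2 * ⟪u, b⟫ = ⟪b, b⟫) :
    ∃ e : Fin n → ℕ, (∀ i ∈ I, e i = 0) ∧ (2 : ℝ) • β - b = ∑ i, (e i : ℝ) • Δ i := by
  have hs : 0 < ⟪β, β⟫ := inner_self_pos' hΦ hβ.1
  have hB : 0 < ⟪b, b⟫ := inner_self_pos' hΦ hb
  obtain ⟨σ, hσΦ, hσs, hσpos⟩ : ∃ σ, σ ∈ Φ ∧ ⟪σ, σ⟫ = ⟪β, β⟫ ∧ 0 < ⟪b, σ⟫ := by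
    obtain ⟨σ₀, h1, h2, h3⟩ := exists_short_not_orth hΦ hβ hb
    rcases lt_or_gt_of_ne h3 with hlt | hgt
    · refine ⟨-σ₀, neg_mem' hΦ h1, ?_, ?_⟩
      · rw [inner_neg_neg]; exact h2
      · rw [inner_neg_right]; linarith
    · exact ⟨σ₀, h1, h2, hgt⟩
  obtain ⟨q, hq⟩ := hΦ.crystallographic b hb σ hσΦ
  obtain ⟨p, hp⟩ := hΦ.crystallographic σ hσΦ b hb
  have hq' : 2 * ⟪b, σ⟫ = (q : ℝ) * ⟪b, b⟫ := by
    have := (coPair_eq_iff (ne_of_gt hB) _).1 hq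
    rwa [real_inner_comm b σ] at this
  have hp' : 2 * ⟪b, σ⟫ = (p : ℝ) * ⟪β, β⟫ := by
    have := (coPair_eq_iff (show (0:ℝ) < ⟪σ, σ⟫ by rw [hσs]; exact hs).ne' _).1 hp
    rwa [hσs] at this
  have hq0 : (0:ℤ) < q := by
    have : (0:ℝ) < (q : ℝ) := by nlinarith
    exact_mod_cast this
  have hp0 : (0:ℤ) < p := by
    have : (0:ℝ) < (p : ℝ) := by nlinarith
    exact_mod_cast this
  have hcs : ⟪b, σ⟫ * ⟪b, σ⟫ ≤ ⟪b, b⟫ * ⟪β, β⟫ := by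
    have := real_inner_mul_inner_self_le b σ
    rwa [hσs] at this
  have hprod : (p:ℝ) * (q:ℝ) * (⟪b, b⟫ * ⟪β, β⟫) = 4 * (⟪b, σ⟫ * ⟪b, σ⟫) := by
    linear_combination (-(2*⟪b, σ⟫))*hp' + (-((p:ℝ)*⟪β, β⟫))*hq'
  have hpq4 : (p:ℝ) * (q:ℝ) ≤ 4 := by nlinarith [hprod, hcs, mul_pos hB hs]
  have hpq4' : p * q ≤ 4 := by exact_mod_cast hpq4
  have hq_eq : q = 1 := by
    by_contra hne
    have hq2 : 2 ≤ q := by omega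
    have hpgt : (q:ℝ) < (p:ℝ) := by nlinarith
    have hqp : q < p := by exact_mod_cast hpgt
    nlinarith
  have hq'' : 2 * ⟪b, σ⟫ = ⟪b, b⟫ := by
    rw [hq_eq] at hq'; push_cast at hq'; linarith
  have hστ : σ - b ∈ Φ := by
    have h := hΦ.reflect_mem b hb σ hσΦ
    rw [hq, hq_eq] at h
    simpa using h
  have hτ : b - σ ∈ Φ := by
    have := neg_mem' hΦ hστ
    rwa [neg_sub] at this
  have hττ : ⟪b - σ, b - σ⟫ = ⟪β, β⟫ := by
    rw [real_inner_sub_sub_self]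
    linarith
  have hσb : 2 * ⟪u, σ⟫ ≤ ⟪β, β⟫ := short_bound hΦ hω hβ hlam hu hcell hσΦ hσs
  have hτb : 2 * ⟪u, b - σ⟫ ≤ ⟪β, β⟫ := short_bound hΦ hω hβ hlam hu hcell hτ hττ
  rw [inner_sub_right] at hτb
  have hB2 : ⟪b, b⟫ ≤ 2 * ⟪β, β⟫ := by linarith
  have hps : (p:ℝ) * ⟪β, β⟫ = ⟪b, b⟫ := by linarith
  have hp_eq : p = 2 := by
    have h1 : (1:ℝ) < (p:ℝ) := by nlinarith
    have h2 : (p:ℝ) ≤ 2 := by nlinarith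
    have h1' : (1:ℤ) < p := by exact_mod_cast h1
    have h2' : p ≤ (2:ℤ) := by exact_mod_cast h2
    omega
  have hBeq : ⟪b, b⟫ = 2 * ⟪β, β⟫ := by
    rw [← hps, hp_eq]; push_cast; ring
  have hσu : 2 * ⟪u, σ⟫ = ⟪β, β⟫ := by linarith
  have hτu : 2 * ⟪u, b - σ⟫ = ⟪β, β⟫ := by
    rw [inner_sub_right]; linarith
  obtain ⟨e, heI, hee⟩ := short_exact hΦ hω hβ hlam hu hcell hσΦ hσs hσu
  obtain ⟨f, hfI, hff⟩ := short_exact hΦ hω hβ hlam hu hcell hτ hττ hτu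
  refine ⟨fun i => e i + f i, fun i hi => by simp [heI i hi, hfI i hi], ?_⟩
  have hsplit : (2:ℝ) • β - b = (β - σ) + (β - (b - σ)) := by
    rw [two_smul]; abel
  rw [hsplit, hee, hff, ← Finset.sum_add_distrib]
  apply Finset.sum_congr rfl
  intro i _
  push_cast
  rw [add_smul]

end Aux

/-- Let `u = ∑_{i ∈ I} λᵢωᵢ` (with `λᵢ > 0`) lie in the fundamental
Weyl cell with `β*(u) = 1` and `u` not a fundamental dominant weight. Then every element of
`Φ_u = {±α : α ∈ Φ⁺, α*(u) ∈ {0,1}}` is an integral combination of the vectors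
`{αᵢ : i ∉ I} ∪ {-β}` with all coefficients nonnegative or all nonpositive. -/
theorem root_subsystem_base_on_cell_boundary
    {V : Type*} [NormedAddCommGroup V] [InnerProductSpace ℝ V] {n : ℕ}
    (Φ : Finset V) (Δ : Fin n → V) (hΦ : IsIrreducibleRootSystem Φ Δ)
    (ω : Fin n → V) (hω : IsFundamentalWeights Δ ω)
    (β : V) (hβ : IsMaximalShortRoot Φ Δ β)
    (I : Finset (Fin n)) (lam : Fin n → ℝ) (hlam : ∀ i ∈ I, 0 < lam i)
    (u : V) (hu : u = ∑ i ∈ I, lam i • ω i)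
    (hcell : coPair β u = 1) (huΩ : ∀ i, u ≠ ω i) :
    ∀ a : V,
      (∃ b : V, IsPositiveRoot Φ Δ b ∧ (coPair b u = 0 ∨ coPair b u = 1) ∧
        (a = b ∨ a = -b)) →
      ∃ (c : Fin n → ℤ) (d : ℤ),
        (((∀ i, 0 ≤ c i) ∧ 0 ≤ d) ∨ ((∀ i, c i ≤ 0) ∧ d ≤ 0)) ∧
        (∀ i ∈ I, c i = 0) ∧
        a = (∑ i, (c i : ℝ) • Δ i) + (d : ℝ) • (-β) := by
  rintro a ⟨b, ⟨hbΦ, hbNN⟩, hbu, hab⟩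
  have key : ∃ (c : Fin n → ℤ) (d : ℤ),
      (((∀ i, 0 ≤ c i) ∧ 0 ≤ d) ∨ ((∀ i, c i ≤ 0) ∧ d ≤ 0)) ∧ (∀ i ∈ I, c i = 0) ∧
      b = (∑ i, (c i : ℝ) • Δ i) + (d : ℝ) • (-β) := by
    have hB : (0:ℝ) < ⟪b, b⟫ := inner_self_pos' hΦ hbΦ
    rcases hbu with h0 | h1
    · -- coPair b u = 0
      have hub : ⟪u, b⟫ = 0 := by
        have := (coPair_eq_iff hB.ne' _).1 h0
        linarith
      obtain ⟨m, hm⟩ := hbNN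
      have hmI : ∀ i ∈ I, m i = 0 := nncomb_support hΦ hω hlam hu hm hub
      refine ⟨fun i => (m i : ℤ), 0, Or.inl ⟨fun i => Int.ofNat_nonneg _, le_refl 0⟩,
        fun i hi => by simp [hmI i hi], ?_⟩
      rw [hm]
      push_cast
      simp
    · -- coPair b u = 1
      have hub : 2 * ⟪u, b⟫ = ⟪b, b⟫ := by
        have := (coPair_eq_iff hB.ne' _).1 h1
        linarith
      have hge : ⟪β, β⟫ ≤ ⟪b, b⟫ := by
        have h := hβ.2.1 b hbΦ
        rw [real_inner_self_eq_norm_sq, real_inner_self_eq_norm_sq]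
        exact pow_le_pow_left₀ (norm_nonneg β) h 2
      rcases eq_or_lt_of_le hge with heq | hlt
      · obtain ⟨e, heI, hee⟩ :=
          short_exact hΦ hω hβ hlam hu hcell hbΦ heq.symm (by linarith)
        refine ⟨fun i => -(e i : ℤ), -1,
          Or.inr ⟨fun i => neg_nonpos.mpr (Int.ofNat_nonneg _), by norm_num⟩,
          fun i hi => by simp [heI i hi], ?_⟩
        have hb' : b = β - ∑ i, (e i : ℝ) • Δ i := by rw [← hee]; abel
        rw [hb']
        push_cast
        simp only [neg_smul, Finset.sum_neg_distrib, smul_neg, neg_neg, one_smul]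
        abel
      · obtain ⟨e, heI, hee⟩ := long_case hΦ hω hβ hlam hu hcell hbΦ hlt hub
        refine ⟨fun i => -(e i : ℤ), -2,
          Or.inr ⟨fun i => neg_nonpos.mpr (Int.ofNat_nonneg _), by norm_num⟩,
          fun i hi => by simp [heI i hi], ?_⟩
        have hb' : b = (2:ℝ) • β - ∑ i, (e i : ℝ) • Δ i := by rw [← hee]; abel
        rw [hb']
        push_cast
        simp only [neg_smul, Finset.sum_neg_distrib, smul_neg, neg_neg]
        abel
  obtain ⟨c, d, hsgn, hI, heq⟩ := key
  rcases hab with rfl | rfl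
  · exact ⟨c, d, hsgn, hI, heq⟩
  · refine ⟨fun i => -(c i), -d, ?_, fun i hi => by simp [hI i hi], ?_⟩
    · rcases hsgn with ⟨h1, h2⟩ | ⟨h1, h2⟩
      · exact Or.inr ⟨fun i => neg_nonpos.mpr (h1 i), by omega⟩
      · exact Or.inl ⟨fun i => neg_nonneg.mpr (h1 i), by omega⟩
    · rw [heq]
      push_cast
      simp only [neg_smul, Finset.sum_neg_distrib]
      abel
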